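/- arXiv:2002.00697 — 2 statements merged into one kernel-verified Lean document; each statement's English description precedes it below -/
import Mathlib

section
/- The bilinear bracket on Iuₙ is alternating ([u,u]=0 for all u) and satisfies the Jacobi identity; consequently Iuₙ, with this bracket, is a Lie algebra over K. -/
/-- Index set for the basis of `Iuₙ`: the off-diagonal pairs indexing the `x_{ij}` (`i ≠ j`),
then the `a_i`'s, then the `b_i`'s. -/
abbrev IuIdx (n : ℕ) : Type := { p : Fin n × Fin n // p.1 ≠ p.2 } ⊕ (Fin n ⊕ Fin n)

/-- `Iuₙ`: the free `K`-vector space on the basis `{x_{ij} : i ≠ j} ∪ {a_i} ∪ {b_i}`. -/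
abbrev Iu (n : ℕ) (K : Type*) [Field K] : Type _ := IuIdx n →₀ K

variable (n : ℕ) (K : Type*) [Field K]

/-- The basis element `x_{ij}` (`i ≠ j`). -/
noncomputable def xE (i j : Fin n) (h : i ≠ j) : Iu n K :=
  Finsupp.single (Sum.inl ⟨(i, j), h⟩) 1

/-- The basis element `a_i`. -/
noncomputable def aE (i : Fin n) : Iu n K := Finsupp.single (Sum.inr (Sum.inl i)) 1

/-- The basis element `b_i`. -/
noncomputable def bE (i : Fin n) : Iu n K := Finsupp.single (Sum.inr (Sum.inr i)) 1

/-- `x_{ij}` as a total function (junk value `0` when `i = j`). -/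
noncomputable def xe (i j : Fin n) : Iu n K := if h : i ≠ j then xE n K i j h else 0

/-- The length `λ(i,j)`: equals `j - i` if `i < j`, and `n - (i - j)` if `i > j`. -/
def lam (n : ℕ) (i j : Fin n) : ℕ := (j - i : Fin n).val

/-- The bracket of `Iuₙ` on basis elements:
`[x_{ij}, x_{kl}] = δ_{jk} x_{il} - δ_{li} x_{kj}` if `λ(i,j) + λ(k,l) < n` and `0` otherwise
(unless both `j = k` and `l = i`); `[x_{ij}, x_{ji}] = ½(b_i - b_j)`;
`[a_i, x_{jk}] = (δ_{ij} - δ_{ik}) x_{jk}`; `[b_i, x_{jk}] = 0`;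
`[a_i, a_j] = [b_i, b_j] = [a_i, b_j] = 0`; extended antisymmetrically. -/
noncomputable def bb : IuIdx n → IuIdx n → Iu n K
  | Sum.inl ⟨(i, j), _⟩, Sum.inl ⟨(k, l), _⟩ =>
      if k = j ∧ l = i then ((2 : K)⁻¹) • (bE n K i - bE n K j)
      else if lam n i j + lam n k l < n then
        (if j = k then xe n K i l else 0) - (if l = i then xe n K k j else 0)
      else 0
  | Sum.inr (Sum.inl i), Sum.inl ⟨(j, k), _⟩ =>
      (((if i = j then 1 else 0) : K) - ((if i = k then 1 else 0) : K)) • xe n K j k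
  | Sum.inl ⟨(j, k), _⟩, Sum.inr (Sum.inl i) =>
      -((((if i = j then 1 else 0) : K) - ((if i = k then 1 else 0) : K)) • xe n K j k)
  | _, _ => 0

/-- The bilinear bracket of `Iuₙ`, extended bilinearly from its values on basis elements. -/
noncomputable def br : Iu n K →ₗ[K] Iu n K →ₗ[K] Iu n K :=
  Finsupp.lift (Iu n K →ₗ[K] Iu n K) K (IuIdx n) fun s =>
    Finsupp.lift (Iu n K) K (IuIdx n) fun t => bb n K s t

/-! ### Auxiliary development: embedding into matrices over `K[X]/(X^(n+1))` -/

open Polynomial Matrix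

section AuxIu

variable {n : ℕ} {K : Type*} [Field K]

/-- basic `lam` facts -/
theorem lam_lt (i j : Fin n) : lam n i j < n := (j - i).isLt

theorem lam_eq_zero_iff (i j : Fin n) : lam n i j = 0 ↔ i = j := by
  have : NeZero n := ⟨i.pos.ne'⟩
  unfold lam
  constructor
  · intro h
    have h2 : j - i = 0 := Fin.ext (by simpa using h)
    exact (sub_eq_zero.mp h2).symm
  · rintro rfl; simp

theorem lam_pos (i j : Fin n) (h : i ≠ j) : 1 ≤ lam n i j := by
  have := (lam_eq_zero_iff i j).not.mpr h
  omega

theorem lam_mod (i j k : Fin n) : (lam n i j + lam n j k) % n = lam n i k := by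
  have : NeZero n := ⟨i.pos.ne'⟩
  have h1 : (k - j) + (j - i) = k - i := sub_add_sub_cancel k j i
  have h2 := congrArg Fin.val h1
  rw [Fin.val_add] at h2
  unfold lam
  rw [Nat.add_comm]
  exact h2

theorem lam_trans (i j k : Fin n) (h : lam n i j + lam n j k < n) :
    lam n i k = lam n i j + lam n j k := by
  have := lam_mod i j k
  rw [Nat.mod_eq_of_lt h] at this
  omega

theorem lam_add_self (i j : Fin n) (h : i ≠ j) : lam n i j + lam n j i = n := by
  have h1 := lam_mod i j i
  have h2 : lam n i i = 0 := (lam_eq_zero_iff i i).mpr rfl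
  have h3 := lam_pos i j h
  have h4 := lam_pos j i (Ne.symm h)
  have h5 := lam_lt i j
  have h6 := lam_lt j i
  rw [h2] at h1
  obtain ⟨c, hc⟩ := Nat.dvd_of_mod_eq_zero h1
  have hc2 : c < 2 := Nat.lt_of_mul_lt_mul_left (a := n) (by omega)
  have hc0 : c ≠ 0 := by rintro rfl; omega
  have hc1 : c = 1 := by omega
  subst hc1
  omega

theorem lam_sum_ne (i j k : Fin n) (hik : i ≠ k) : lam n i j + lam n j k ≠ n := by
  intro h
  have h1 := lam_mod i j k
  rw [h, Nat.mod_self] at h1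
  exact hik ((lam_eq_zero_iff i k).mp h1.symm)

end AuxIu

section AuxRing

variable (n : ℕ) (K : Type*) [Field K]

theorem hmon : ((X : K[X]) ^ (n + 1)).Monic := monic_X_pow _

/-- `K[X]/(X^(n+1))` -/
noncomputable abbrev Rq : Type _ := AdjoinRoot ((X : K[X]) ^ (n + 1))

/-- image of `t^d` -/
noncomputable def tp (d : ℕ) : Rq n K := (AdjoinRoot.root _) ^ d

theorem tp_eq_mk (d : ℕ) : tp n K d = AdjoinRoot.mk _ ((X : K[X]) ^ d) := by
  rw [map_pow, AdjoinRoot.mk_X]; rfl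

theorem tp_mul (a b : ℕ) : tp n K a * tp n K b = tp n K (a + b) := (pow_add _ _ _).symm

theorem tp_zero (d : ℕ) (hd : n + 1 ≤ d) : tp n K d = 0 := by
  rw [tp_eq_mk, AdjoinRoot.mk_eq_zero]
  exact pow_dvd_pow _ hd

/-- coefficient extraction from `Rq` -/
noncomputable def cQ (k : ℕ) : Rq n K →ₗ[K] K :=
  (lcoeff K k).comp (AdjoinRoot.modByMonicHom (hmon n K))

theorem cQ_tp (k d : ℕ) (hd : d ≤ n) : cQ n K k (tp n K d) = if k = d then 1 else 0 := by
  rw [tp_eq_mk]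
  have h1 : ((X : K[X]) ^ d) %ₘ ((X : K[X]) ^ (n + 1)) = (X : K[X]) ^ d := by
    rw [Polynomial.modByMonic_eq_self_iff (hmon n K)]
    rw [degree_X_pow, degree_X_pow]
    exact_mod_cast Nat.lt_succ_of_le hd
  simp only [cQ, LinearMap.comp_apply, AdjoinRoot.modByMonicHom_mk, h1, lcoeff_apply,
    coeff_X_pow]

/-- the target matrix images of basis elements -/
noncomputable def Phi : IuIdx n → Matrix (Fin n) (Fin n) (Rq n K)
  | Sum.inl ⟨(i, j), _⟩ => Matrix.single i j (tp n K (lam n i j))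
  | Sum.inr (Sum.inl i) => Matrix.single i i 1
  | Sum.inr (Sum.inr i) => Matrix.single i i ((2 : K) • tp n K n)

/-- the embedding -/
noncomputable def phi : Iu n K →ₗ[K] Matrix (Fin n) (Fin n) (Rq n K) :=
  Finsupp.lift _ K _ (Phi n K)

theorem phi_single (s : IuIdx n) (c : K) :
    phi n K (Finsupp.single s c) = c • Phi n K s := by
  rw [phi, Finsupp.lift_apply, Finsupp.sum_single_index (by simp)]

theorem sbm_mul (i j k l : Fin n) (a b : Rq n K) :
    Matrix.single i j a * Matrix.single k l b =
      if j = k then Matrix.single i l (a * b) else 0 := by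
  by_cases h : j = k
  · subst h
    rw [if_pos rfl]
    exact Matrix.single_mul_single_same (c := a) i j l b
  · rw [if_neg h]
    exact Matrix.single_mul_single_of_ne (c := a) i j k h b

end AuxRing
section Key

variable (n : ℕ) (K : Type*) [Field K]

theorem phi_bE (i : Fin n) :
    phi n K (bE n K i) = Matrix.single i i ((2 : K) • tp n K n) := by
  rw [bE, phi_single, one_smul]; rfl

theorem phi_xE (i j : Fin n) (h : i ≠ j) :
    phi n K (xE n K i j h) = Matrix.single i j (tp n K (lam n i j)) := by
  rw [xE, phi_single, one_smul]; rfl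

theorem phi_xe (i j : Fin n) (h : i ≠ j) :
    phi n K (xe n K i j) = Matrix.single i j (tp n K (lam n i j)) := by
  rw [xe, dif_pos h, phi_xE]

theorem tp_big (i j k : Fin n) (hik : i ≠ k) (hbig : ¬ lam n i j + lam n j k < n) :
    tp n K (lam n i j + lam n j k) = 0 := by
  refine tp_zero n K _ ?_
  have := lam_sum_ne i j k hik
  omega

theorem sbm_neg (i j : Fin n) (a : Rq n K) :
    Matrix.single i j (-a) = -Matrix.single i j a := by
  ext r c
  simp only [Matrix.single, Matrix.of_apply, Matrix.neg_apply]
  split <;> simp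

theorem key (hK : (2 : K) ≠ 0) (s t : IuIdx n) :
    phi n K (bb n K s t) = Phi n K s * Phi n K t - Phi n K t * Phi n K s := by
  obtain ⟨⟨i, j⟩, hij⟩ | i | i := s <;> obtain ⟨⟨k, l⟩, hkl⟩ | k | k := t
  · -- X X
    show phi n K (bb n K _ _) = _
    rw [show bb n K (Sum.inl ⟨(i, j), hij⟩) (Sum.inl ⟨(k, l), hkl⟩) =
      (if k = j ∧ l = i then ((2 : K)⁻¹) • (bE n K i - bE n K j)
      else if lam n i j + lam n k l < n then
        (if j = k then xe n K i l else 0) - (if l = i then xe n K k j else 0)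
      else 0) from rfl]
    rw [Phi, Phi, sbm_mul, sbm_mul]
    by_cases hc : k = j ∧ l = i
    · obtain ⟨rfl, rfl⟩ := hc
      rw [if_pos ⟨rfl, rfl⟩, if_pos rfl, if_pos rfl]
      rw [_root_.map_smul, map_sub, phi_bE, phi_bE]
      rw [tp_mul, tp_mul, lam_add_self l k hij, lam_add_self k l (Ne.symm hij)]
      rw [smul_sub, Matrix.smul_single, Matrix.smul_single, smul_smul,
        inv_mul_cancel₀ hK, one_smul]
    · rw [if_neg hc]
      have hc' : ¬(j = k ∧ i = l) := fun ⟨h1, h2⟩ => hc ⟨h1.symm, h2.symm⟩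
      by_cases hlt : lam n i j + lam n k l < n
      · rw [if_pos hlt, map_sub]
        congr 1
        · by_cases hjk : j = k
          · subst hjk
            have hil : i ≠ l := fun h => hc' ⟨rfl, h⟩
            rw [if_pos rfl, if_pos rfl, phi_xe n K i l hil, tp_mul,
              lam_trans i j l hlt]
          · rw [if_neg hjk, if_neg hjk, map_zero]
        · by_cases hli : l = i
          · subst hli
            have hkj : k ≠ j := fun h => hc ⟨h, rfl⟩
            rw [if_pos rfl, if_pos rfl, phi_xe n K k j hkj, tp_mul,
              lam_trans k l j (by omega)]
          · rw [if_neg hli, if_neg hli, map_zero]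
      · rw [if_neg hlt, map_zero]
        symm
        rw [sub_eq_zero]
        have e1 : (if j = k then Matrix.single i l (tp n K (lam n i j) * tp n K (lam n k l))
            else 0) = 0 := by
          by_cases hjk : j = k
          · subst hjk
            have hil : i ≠ l := fun h => hc ⟨rfl, h.symm⟩
            rw [if_pos rfl, tp_mul, tp_big n K i j l hil hlt, Matrix.single_zero]
          · rw [if_neg hjk]
        have e2 : (if l = i then Matrix.single k j (tp n K (lam n k l) * tp n K (lam n i j))
            else 0) = 0 := by
          by_cases hli : l = i
          · subst hli
            have hkj : k ≠ j := fun h => hc ⟨h, rfl⟩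
            rw [if_pos rfl, tp_mul, tp_big n K k l j hkj (by omega), Matrix.single_zero]
          · rw [if_neg hli]
        rw [e1, e2]
  · -- X A
    show phi n K (-((((if k = i then 1 else 0) : K) - ((if k = j then 1 else 0) : K)) •
      xe n K i j)) = _
    rw [map_neg, _root_.map_smul, phi_xe n K i j hij, Phi, Phi, sbm_mul, sbm_mul]
    have hij' : i ≠ j := hij
    by_cases hki : k = i <;> by_cases hkj : k = j <;>
      simp_all [Matrix.smul_single, eq_comm, sbm_neg]
  · -- X B
    show phi n K 0 = _
    rw [map_zero, Phi, Phi, sbm_mul, sbm_mul]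
    have h1 : tp n K (lam n i j) * ((2 : K) • tp n K n) = 0 := by
      rw [mul_smul_comm, tp_mul, tp_zero n K _ (by have := lam_pos i j hij; omega), smul_zero]
    have h2 : ((2 : K) • tp n K n) * tp n K (lam n i j) = 0 := by
      rw [smul_mul_assoc, tp_mul, tp_zero n K _ (by have := lam_pos i j hij; omega), smul_zero]
    rw [h1, h2]
    simp
  · -- A X
    show phi n K ((((if i = k then 1 else 0) : K) - ((if i = l then 1 else 0) : K)) •
      xe n K k l) = _
    rw [_root_.map_smul, phi_xe n K k l hkl, Phi, Phi, sbm_mul, sbm_mul]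
    have hkl' : k ≠ l := hkl
    by_cases hik : i = k <;> by_cases hil : i = l <;>
      simp_all [Matrix.smul_single, eq_comm, sbm_neg]
  · -- A A
    show phi n K 0 = _
    rw [map_zero, Phi, Phi, sbm_mul, sbm_mul]
    by_cases h : i = k
    · subst h; simp
    · rw [if_neg h, if_neg (fun h2 : k = i => h h2.symm)]; simp
  · -- A B
    show phi n K 0 = _
    rw [map_zero, Phi, Phi, sbm_mul, sbm_mul]
    by_cases h : i = k
    · subst h; rw [if_pos rfl, if_pos rfl, one_mul, mul_one, sub_self]
    · rw [if_neg h, if_neg (fun h2 : k = i => h h2.symm), sub_self]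
  · -- B X
    show phi n K 0 = _
    rw [map_zero, Phi, Phi, sbm_mul, sbm_mul]
    have h1 : tp n K (lam n k l) * ((2 : K) • tp n K n) = 0 := by
      rw [mul_smul_comm, tp_mul, tp_zero n K _ (by have := lam_pos k l hkl; omega), smul_zero]
    have h2 : ((2 : K) • tp n K n) * tp n K (lam n k l) = 0 := by
      rw [smul_mul_assoc, tp_mul, tp_zero n K _ (by have := lam_pos k l hkl; omega), smul_zero]
    rw [h1, h2]
    simp
  · -- B A
    show phi n K 0 = _
    rw [map_zero, Phi, Phi, sbm_mul, sbm_mul]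
    by_cases h : i = k
    · subst h; rw [if_pos rfl, if_pos rfl, one_mul, mul_one, sub_self]
    · rw [if_neg h, if_neg (fun h2 : k = i => h h2.symm), sub_self]
  · -- B B
    show phi n K 0 = _
    rw [map_zero, Phi, Phi, sbm_mul, sbm_mul]
    have h1 : ((2 : K) • tp n K n) * ((2 : K) • tp n K n) = 0 := by
      rw [smul_mul_assoc, mul_smul_comm, tp_mul,
        tp_zero n K _ (by have := i.pos; omega), smul_zero, smul_zero]
    rw [h1]
    by_cases h : i = k
    · subst h; simp
    · rw [if_neg h, if_neg (fun h2 : k = i => h h2.symm)]; simp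

end Key
section Psi

variable (n : ℕ) (K : Type*) [Field K]

/-- one summand of the retraction -/
noncomputable def psiT : IuIdx n → Matrix (Fin n) (Fin n) (Rq n K) → Iu n K
  | Sum.inl ⟨(i, j), h⟩ => fun m => cQ n K (lam n i j) (m i j) • xE n K i j h
  | Sum.inr (Sum.inl i) => fun m => cQ n K 0 (m i i) • aE n K i
  | Sum.inr (Sum.inr i) => fun m => ((2 : K)⁻¹ * cQ n K n (m i i)) • bE n K i

/-- the retraction -/
noncomputable def psi (m : Matrix (Fin n) (Fin n) (Rq n K)) : Iu n K :=
  ∑ s : IuIdx n, psiT n K s m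

theorem psiT_add (s : IuIdx n) (m m' : Matrix (Fin n) (Fin n) (Rq n K)) :
    psiT n K s (m + m') = psiT n K s m + psiT n K s m' := by
  obtain ⟨⟨i, j⟩, h⟩ | i | i := s <;>
    simp [psiT, Matrix.add_apply, map_add, add_smul, mul_add]

theorem psiT_smul (s : IuIdx n) (c : K) (m : Matrix (Fin n) (Fin n) (Rq n K)) :
    psiT n K s (c • m) = c • psiT n K s m := by
  obtain ⟨⟨i, j⟩, h⟩ | i | i := s <;>
    simp [psiT, Matrix.smul_apply, _root_.map_smul, smul_smul, smul_eq_mul, mul_left_comm]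

theorem psi_add (m m' : Matrix (Fin n) (Fin n) (Rq n K)) :
    psi n K (m + m') = psi n K m + psi n K m' := by
  simp [psi, psiT_add, Finset.sum_add_distrib]

theorem psi_smul (c : K) (m : Matrix (Fin n) (Fin n) (Rq n K)) :
    psi n K (c • m) = c • psi n K m := by
  simp [psi, psiT_smul, Finset.smul_sum]

theorem psi_zero : psi n K 0 = 0 := by
  have h := psi_smul n K 0 0
  simpa using h

theorem psiT_Phi_self (s : IuIdx n) (hK : (2 : K) ≠ 0) :
    psiT n K s (Phi n K s) = Finsupp.single s 1 := by
  obtain ⟨⟨i, j⟩, hij⟩ | i | i := s <;> simp only [psiT, Phi, Matrix.single_apply_same]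
  · rw [cQ_tp n K _ _ (by have := lam_lt i j; omega), if_pos rfl, one_smul, xE]
  · rw [show (1 : Rq n K) = tp n K 0 from (pow_zero _).symm, cQ_tp n K 0 0 (by omega),
      if_pos rfl, one_smul, aE]
  · rw [_root_.map_smul, cQ_tp n K n n le_rfl, if_pos rfl, smul_eq_mul, mul_one,
      inv_mul_cancel₀ hK, one_smul, bE]

theorem psiT_Phi_ne (t s : IuIdx n) (hn : 2 ≤ n) (hts : t ≠ s) :
    psiT n K t (Phi n K s) = 0 := by
  obtain ⟨⟨i, j⟩, hij⟩ | i | i := s <;> obtain ⟨⟨k, l⟩, hkl⟩ | k | k := t <;>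
    simp only [psiT, Phi]
  · have h : ¬(i = k ∧ j = l) := by rintro ⟨rfl, rfl⟩; exact hts rfl
    rw [Matrix.single_apply_of_ne (h := h), map_zero, zero_smul]
  · have h : ¬(i = k ∧ j = k) := by rintro ⟨rfl, rfl⟩; exact hij rfl
    rw [Matrix.single_apply_of_ne (h := h), map_zero, zero_smul]
  · have h : ¬(i = k ∧ j = k) := by rintro ⟨rfl, rfl⟩; exact hij rfl
    rw [Matrix.single_apply_of_ne (h := h), map_zero, mul_zero, zero_smul]
  · have h : ¬(i = k ∧ i = l) := by rintro ⟨rfl, rfl⟩; exact hkl rfl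
    rw [Matrix.single_apply_of_ne (h := h), map_zero, zero_smul]
  · have h : ¬(i = k ∧ i = k) := by rintro ⟨rfl, -⟩; exact hts rfl
    rw [Matrix.single_apply_of_ne (h := h), map_zero, zero_smul]
  · by_cases h : i = k
    · subst h
      rw [Matrix.single_apply_same, show (1 : Rq n K) = tp n K 0 from (pow_zero _).symm,
        cQ_tp n K n 0 (by omega), if_neg (by omega), mul_zero, zero_smul]
    · rw [Matrix.single_apply_of_ne (h := fun hh => h hh.1), map_zero, mul_zero, zero_smul]
  · have h : ¬(i = k ∧ i = l) := by rintro ⟨rfl, rfl⟩; exact hkl rfl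
    rw [Matrix.single_apply_of_ne (h := h), map_zero, zero_smul]
  · by_cases h : i = k
    · subst h
      rw [Matrix.single_apply_same, _root_.map_smul, cQ_tp n K 0 n le_rfl,
        if_neg (by omega), smul_zero, zero_smul]
    · rw [Matrix.single_apply_of_ne (h := fun hh => h hh.1), map_zero, zero_smul]
  · by_cases h : i = k
    · subst h; exact absurd rfl hts
    · rw [Matrix.single_apply_of_ne (h := fun hh => h hh.1), map_zero, mul_zero, zero_smul]

theorem psi_Phi (hn : 2 ≤ n) (hK : (2 : K) ≠ 0) (s : IuIdx n) :
    psi n K (Phi n K s) = Finsupp.single s 1 := by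
  rw [psi, Finset.sum_eq_single s (fun t _ hts => psiT_Phi_ne n K t s hn hts)
    (fun h => absurd (Finset.mem_univ s) h)]
  exact psiT_Phi_self n K s hK

theorem psi_phi (hn : 2 ≤ n) (hK : (2 : K) ≠ 0) (u : Iu n K) :
    psi n K (phi n K u) = u := by
  induction u using Finsupp.induction_linear with
  | zero => rw [map_zero, psi_zero]
  | add f g hf hg => rw [map_add, psi_add, hf, hg]
  | single s c =>
      rw [phi_single, psi_smul, psi_Phi n K hn hK s, Finsupp.smul_single, smul_eq_mul, mul_one]

theorem br_single (s t : IuIdx n) (c d : K) :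
    br n K (Finsupp.single s c) (Finsupp.single t d) = c • d • bb n K s t := by
  rw [br, Finsupp.lift_apply, Finsupp.sum_single_index (by simp), LinearMap.smul_apply,
    Finsupp.lift_apply, Finsupp.sum_single_index (by simp)]

theorem phi_br (hK : (2 : K) ≠ 0) (u v : Iu n K) :
    phi n K (br n K u v) = phi n K u * phi n K v - phi n K v * phi n K u := by
  induction u using Finsupp.induction_linear with
  | zero => simp
  | add f g hf hg =>
      simp only [map_add, LinearMap.add_apply, hf, hg, add_mul, mul_add]
      abel
  | single s c =>
      induction v using Finsupp.induction_linear with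
      | zero => simp
      | add f g hf hg =>
          simp only [map_add, LinearMap.add_apply, hf, hg, add_mul, mul_add]
          abel
      | single t d =>
          rw [br_single, _root_.map_smul, _root_.map_smul, key n K hK s t,
            phi_single, phi_single]
          simp [smul_sub, smul_mul_assoc, mul_smul_comm, smul_smul, mul_comm]

end Psi
/-- the bilinear bracket on `Iuₙ` is alternating and satisfies the Jacobi
identity; consequently `Iuₙ`, with this bracket, is a Lie algebra over `K`. -/
theorem stmt0 (n : ℕ) (hn : 2 ≤ n) (K : Type*) [Field K] (hK : (2 : K) ≠ 0) :
    (∀ u : Iu n K, br n K u u = 0) ∧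
    (∀ u v w : Iu n K,
      br n K (br n K u v) w + br n K (br n K v w) u + br n K (br n K w u) v = 0) ∧
    ∃ inst : LieRing (Iu n K),
      inst.toAddCommGroup = (inferInstance : AddCommGroup (Iu n K)) ∧
      ∀ u v : Iu n K, @Bracket.bracket _ _ inst.toBracket u v = br n K u v := by
  have hret : ∀ u : Iu n K, psi n K (phi n K u) = u := psi_phi n K hn hK
  have halt : ∀ u : Iu n K, br n K u u = 0 := by
    intro u
    calc br n K u u = psi n K (phi n K (br n K u u)) := (hret _).symm
      _ = psi n K (phi n K u * phi n K u - phi n K u * phi n K u) := by rw [phi_br n K hK]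
      _ = psi n K 0 := by rw [sub_self]
      _ = 0 := psi_zero n K
  have hjac : ∀ u v w : Iu n K,
      br n K (br n K u v) w + br n K (br n K v w) u + br n K (br n K w u) v = 0 := by
    intro u v w
    calc br n K (br n K u v) w + br n K (br n K v w) u + br n K (br n K w u) v
        = psi n K (phi n K (br n K (br n K u v) w + br n K (br n K v w) u +
            br n K (br n K w u) v)) := (hret _).symm
      _ = psi n K 0 := by
          simp only [map_add, phi_br n K hK]
          congr 1
          noncomm_ring
      _ = 0 := psi_zero n K
  have hleib : ∀ x y z : Iu n K,
      br n K x (br n K y z) = br n K (br n K x y) z + br n K y (br n K x z) := by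
    intro x y z
    calc br n K x (br n K y z) = psi n K (phi n K (br n K x (br n K y z))) := (hret _).symm
      _ = psi n K (phi n K (br n K (br n K x y) z + br n K y (br n K x z))) := by
          simp only [map_add, phi_br n K hK]
          congr 1
          noncomm_ring
      _ = br n K (br n K x y) z + br n K y (br n K x z) := hret _
  refine ⟨halt, hjac, ⟨{ (inferInstance : AddCommGroup (Iu n K)) with
      bracket := fun u v => br n K u v
      add_lie := fun x y z => by simp [map_add]
      lie_add := fun x y z => by simp [map_add]
      lie_self := halt
      leibniz_lie := hleib }, rfl, fun u v => rfl⟩⟩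
end

section
/- Let B be the symmetric bilinear form on Iuₙ determined on basis elements by B(x_{ij}, x_{ji}) = 1 for all i ≠ j, B(a_i, b_j) = B(b_j, a_i) = 2δ_{ij}, and B = 0 on all other pairs of basis elements. Then B is nondegenerate and invariant: B([u, v], w) = B(u, [v, w]) for all u, v, w ∈ Iuₙ. -/
variable (n : ℕ) (K : Type*) [Field K]

/-- The symmetric bilinear form `B` on basis elements: `B(x_{ij}, x_{ji}) = 1`,
`B(a_i, b_j) = B(b_j, a_i) = 2 δ_{ij}`, and `B = 0` on all other pairs. -/
noncomputable def bf : IuIdx n → IuIdx n → K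
  | Sum.inl ⟨(i, j), _⟩, Sum.inl ⟨(k, l), _⟩ => if k = j ∧ l = i then 1 else 0
  | Sum.inr (Sum.inl i), Sum.inr (Sum.inr j) => if i = j then 2 else 0
  | Sum.inr (Sum.inr i), Sum.inr (Sum.inl j) => if i = j then 2 else 0
  | _, _ => 0

/-- The bilinear form `B`, extended bilinearly from basis elements. -/
noncomputable def Bform : Iu n K →ₗ[K] Iu n K →ₗ[K] K :=
  Finsupp.lift (Iu n K →ₗ[K] K) K (IuIdx n) fun s =>
    Finsupp.lift K K (IuIdx n) fun t => bf n K s t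

section Aux

variable {n : ℕ} {K : Type*} [Field K]

/-- Duality involution on indices. -/
def sg : IuIdx n → IuIdx n
  | Sum.inl ⟨(i, j), h⟩ => Sum.inl ⟨(j, i), fun e => h e.symm⟩
  | Sum.inr (Sum.inl i) => Sum.inr (Sum.inr i)
  | Sum.inr (Sum.inr i) => Sum.inr (Sum.inl i)

/-- The pairing constants. -/
noncomputable def cc (K : Type*) [Field K] : IuIdx n → K
  | Sum.inl _ => 1
  | _ => 2

@[simp] lemma sg_sg (t : IuIdx n) : sg (sg t) = t := by
  rcases t with ⟨⟨i, j⟩, h⟩ | i | i <;> rfl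

lemma cc_sg (t : IuIdx n) : cc K (sg t) = cc K t := by
  rcases t with ⟨⟨i, j⟩, h⟩ | i | i <;> rfl

lemma cc_ne_zero (hK : (2 : K) ≠ 0) (t : IuIdx n) : cc K t ≠ 0 := by
  rcases t with ⟨⟨i, j⟩, h⟩ | i | i <;> simp [cc, hK]

lemma bf_eq (s t : IuIdx n) : bf n K s t = if s = sg t then cc K t else 0 := by
  rcases s with ⟨⟨i, j⟩, hij⟩ | m | m <;> rcases t with ⟨⟨k, l⟩, hkl⟩ | m' | m'
  · by_cases h : k = j ∧ l = i
    · obtain ⟨rfl, rfl⟩ := h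
      simp [bf, sg, cc]
    · rw [show bf n K (Sum.inl ⟨(i, j), hij⟩) (Sum.inl ⟨(k, l), hkl⟩)
          = if k = j ∧ l = i then 1 else 0 from rfl, if_neg h, sg, if_neg]
      intro e
      rw [Sum.inl.injEq, Subtype.mk.injEq, Prod.mk.injEq] at e
      exact h ⟨e.2.symm, e.1.symm⟩
  · simp [bf, sg]
  · simp [bf, sg]
  · simp [bf, sg]
  · simp [bf, sg]
  · simp [bf, sg, cc]
  · simp [bf, sg]
  · simp [bf, sg, cc]
  · simp [bf, sg]

lemma bf_eq' (s t : IuIdx n) : bf n K s t = if t = sg s then cc K s else 0 := by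
  rw [bf_eq]
  by_cases h : s = sg t
  · rw [if_pos h, if_pos (by rw [h, sg_sg]), h, cc_sg]
  · rw [if_neg h, if_neg (fun e => h (by rw [e, sg_sg]))]

lemma Bform_apply (u v : Iu n K) :
    Bform n K u v = u.sum fun s cs => v.sum fun t ct => cs * (ct * bf n K s t) := by
  rw [Bform, Finsupp.lift_apply]
  simp only [Finsupp.sum, LinearMap.coe_sum, Finset.sum_apply, LinearMap.smul_apply,
    Finsupp.lift_apply, smul_eq_mul, Finset.mul_sum]

lemma Bform_single_right (u : Iu n K) (t : IuIdx n) :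
    Bform n K u (Finsupp.single t 1) = cc K t * u (sg t) := by
  rw [Bform_apply]
  have h1 : (u.sum fun s cs => (Finsupp.single t (1 : K)).sum fun t' ct => cs * (ct * bf n K s t'))
      = u.sum fun s cs => if s = sg t then cs * cc K t else 0 := by
    apply Finsupp.sum_congr
    intro s _
    rw [Finsupp.sum_single_index (by simp), one_mul, bf_eq]
    split_ifs <;> ring
  rw [h1, Finsupp.sum_ite_eq']
  split_ifs with h
  · ring
  · rw [Finsupp.notMem_support_iff.mp h, mul_zero]

lemma Bform_single_left (s : IuIdx n) (v : Iu n K) :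
    Bform n K (Finsupp.single s 1) v = cc K s * v (sg s) := by
  rw [Bform_apply, Finsupp.sum_single_index (by simp [Finsupp.sum])]
  have h1 : (v.sum fun t ct => (1 : K) * (ct * bf n K s t))
      = v.sum fun t ct => if t = sg s then ct * cc K s else 0 := by
    apply Finsupp.sum_congr
    intro t _
    rw [one_mul, bf_eq']
    split_ifs <;> ring
  rw [h1, Finsupp.sum_ite_eq']
  split_ifs with h
  · ring
  · rw [Finsupp.notMem_support_iff.mp h, mul_zero]

lemma br_single_single (s t : IuIdx n) :
    br n K (Finsupp.single s 1) (Finsupp.single t 1) = bb n K s t := by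
  rw [br, Finsupp.lift_apply, Finsupp.sum_single_index (by simp), one_smul,
    Finsupp.lift_apply, Finsupp.sum_single_index (by simp), one_smul]

end Aux

section Aux2

variable {n : ℕ} {K : Type*} [Field K]

lemma lam_eq (i j : Fin n) : lam n i j = (n - i.val + j.val) % n := by
  simp [lam, Fin.sub_def]

lemma mod2 (x m : ℕ) (hm : 0 < m) (h : x < 2 * m) :
    x % m = if x < m then x else x - m := by
  split_ifs with h1
  · exact Nat.mod_eq_of_lt h1
  · rw [Nat.mod_eq_sub_mod (le_of_not_gt h1), Nat.mod_eq_of_lt (by omega)]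

lemma lam_lemma (a b c : Fin n) (hab : a ≠ b) (hbc : b ≠ c) (hca : c ≠ a) :
    (lam n a b + lam n b c < n ↔ lam n b c + lam n c a < n) := by
  have hn : 0 < n := a.pos
  have h1 : a.val ≠ b.val := fun e => hab (Fin.ext e)
  have h2 : b.val ≠ c.val := fun e => hbc (Fin.ext e)
  have h3 : c.val ≠ a.val := fun e => hca (Fin.ext e)
  have ha := a.isLt; have hb := b.isLt; have hc := c.isLt
  rw [lam_eq, lam_eq, lam_eq, mod2 _ _ hn (by omega), mod2 _ _ hn (by omega),
    mod2 _ _ hn (by omega)]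
  split_ifs <;> omega

@[simp] lemma xe_apply_inr (i j : Fin n) (m : Fin n ⊕ Fin n) :
    xe n K i j (Sum.inr m) = 0 := by
  rw [xe]; split_ifs <;> simp [xE, Finsupp.single_apply]

lemma xe_apply_inl (i j p q : Fin n) (h : p ≠ q) :
    xe n K i j (Sum.inl ⟨(p, q), h⟩) = if i = p ∧ j = q then 1 else 0 := by
  by_cases h1 : i ≠ j
  · rw [xe, dif_pos h1, xE, Finsupp.single_apply]
    by_cases h2 : i = p ∧ j = q
    · obtain ⟨rfl, rfl⟩ := h2; simp
    · rw [if_neg, if_neg h2]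
      intro e
      rw [Sum.inl.injEq, Subtype.mk.injEq, Prod.mk.injEq] at e
      exact h2 e
  · have h3 : ¬(i = p ∧ j = q) := by
      rintro ⟨rfl, rfl⟩; exact h (not_not.mp h1)
    rw [xe, dif_neg h1, if_neg h3]; simp

@[simp] lemma bE_apply (i : Fin n) (m : IuIdx n) :
    bE n K i m = if m = Sum.inr (Sum.inr i) then 1 else 0 := by
  simp [bE, Finsupp.single_apply, eq_comm]

lemma bb_xx_def (i j k l : Fin n) (hij : i ≠ j) (hkl : k ≠ l) :
    bb n K (Sum.inl ⟨(i, j), hij⟩) (Sum.inl ⟨(k, l), hkl⟩)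
      = if k = j ∧ l = i then ((2 : K)⁻¹) • (bE n K i - bE n K j)
        else if lam n i j + lam n k l < n then
          (if j = k then xe n K i l else 0) - (if l = i then xe n K k j else 0)
        else 0 := rfl

lemma bb_ax_def (m j k : Fin n) (hjk : j ≠ k) :
    bb n K (Sum.inr (Sum.inl m)) (Sum.inl ⟨(j, k), hjk⟩)
      = (((if m = j then 1 else 0) : K) - ((if m = k then 1 else 0) : K)) • xe n K j k := rfl

lemma bb_xa_def (m j k : Fin n) (hjk : j ≠ k) :
    bb n K (Sum.inl ⟨(j, k), hjk⟩) (Sum.inr (Sum.inl m))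
      = -((((if m = j then 1 else 0) : K) - ((if m = k then 1 else 0) : K)) • xe n K j k) := rfl

@[simp] lemma bb_xb (i j : Fin n) (hij : i ≠ j) (m : Fin n) :
    bb n K (Sum.inl ⟨(i, j), hij⟩) (Sum.inr (Sum.inr m)) = 0 := rfl

@[simp] lemma bb_aa (i m : Fin n) :
    bb n K (Sum.inr (Sum.inl i)) (Sum.inr (Sum.inl m)) = 0 := rfl

@[simp] lemma bb_ab (i m : Fin n) :
    bb n K (Sum.inr (Sum.inl i)) (Sum.inr (Sum.inr m)) = 0 := rfl

@[simp] lemma bb_b_left (m : Fin n) (t : IuIdx n) :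
    bb n K (Sum.inr (Sum.inr m)) t = 0 := by
  rcases t with ⟨⟨k, l⟩, h⟩ | k | k <;> rfl

lemma bb_apply_a (s t : IuIdx n) (m : Fin n) :
    bb n K s t (Sum.inr (Sum.inl m)) = 0 := by
  rcases s with ⟨⟨i, j⟩, hij⟩ | i | i <;> rcases t with ⟨⟨k, l⟩, hkl⟩ | k | k <;>
    simp only [bb_xx_def, bb_ax_def, bb_xa_def, bb_xb, bb_aa, bb_ab, bb_b_left,
      Finsupp.coe_zero, Pi.zero_apply] <;>
    split_ifs <;>
    simp [Finsupp.smul_apply, Finsupp.sub_apply, Finsupp.neg_apply]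

lemma bb_xx_x (i j k l p q : Fin n) (hij : i ≠ j) (hkl : k ≠ l) (hpq : p ≠ q) :
    bb n K (Sum.inl ⟨(i, j), hij⟩) (Sum.inl ⟨(k, l), hkl⟩) (Sum.inl ⟨(p, q), hpq⟩)
      = if k = j ∧ l = i then 0
        else if lam n i j + lam n k l < n then
          (if j = k ∧ i = p ∧ l = q then 1 else 0)
            - (if l = i ∧ k = p ∧ j = q then 1 else 0)
        else 0 := by
  rw [bb_xx_def]
  by_cases h1 : k = j ∧ l = i
  · rw [if_pos h1, if_pos h1]
    simp [Finsupp.smul_apply, Finsupp.sub_apply]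
  · rw [if_neg h1, if_neg h1]
    by_cases h2 : lam n i j + lam n k l < n
    · rw [if_pos h2, if_pos h2, Finsupp.sub_apply]
      congr 1
      · by_cases h : j = k
        · rw [if_pos h, xe_apply_inl _ _ _ _ hpq]
          by_cases h' : i = p ∧ l = q
          · rw [if_pos h', if_pos ⟨h, h'.1, h'.2⟩]
          · rw [if_neg h', if_neg (fun e => h' ⟨e.2.1, e.2.2⟩)]
        · rw [if_neg h, if_neg (fun e => h e.1)]; simp
      · by_cases h : l = i
        · rw [if_pos h, xe_apply_inl _ _ _ _ hpq]
          by_cases h' : k = p ∧ j = q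
          · rw [if_pos h', if_pos ⟨h, h'.1, h'.2⟩]
          · rw [if_neg h', if_neg (fun e => h' ⟨e.2.1, e.2.2⟩)]
        · rw [if_neg h, if_neg (fun e => h e.1)]; simp
    · rw [if_neg h2, if_neg h2]; simp

lemma bb_xx_b (i j k l m : Fin n) (hij : i ≠ j) (hkl : k ≠ l) :
    bb n K (Sum.inl ⟨(i, j), hij⟩) (Sum.inl ⟨(k, l), hkl⟩) (Sum.inr (Sum.inr m))
      = if k = j ∧ l = i then
          (2 : K)⁻¹ * ((if m = i then 1 else 0) - (if m = j then 1 else 0))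
        else 0 := by
  rw [bb_xx_def]
  by_cases h1 : k = j ∧ l = i
  · rw [if_pos h1, if_pos h1]
    simp [Finsupp.smul_apply, Finsupp.sub_apply, Sum.inr.injEq]
  · rw [if_neg h1, if_neg h1]
    by_cases h2 : lam n i j + lam n k l < n
    · rw [if_pos h2, Finsupp.sub_apply]
      split_ifs <;> simp
    · rw [if_neg h2]; simp

end Aux2

section Aux3

variable {n : ℕ} {K : Type*} [Field K]

lemma core (hK : (2 : K) ≠ 0) (s t r : IuIdx n) :
    cc K r * bb n K s t (sg r) = cc K s * bb n K t r (sg s) := by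
  rcases s with ⟨⟨i, j⟩, hij⟩ | i | i <;> rcases t with ⟨⟨k, l⟩, hkl⟩ | k | k <;>
    rcases r with ⟨⟨p, q⟩, hpq⟩ | p | p
  -- (x, x, x)
  · replace hij : i ≠ j := hij
    replace hkl : k ≠ l := hkl
    replace hpq : p ≠ q := hpq
    simp only [sg, cc, one_mul,
      bb_xx_x i j k l q p hij hkl hpq.symm,
      bb_xx_x k l p q j i hkl hpq hij.symm]
    by_cases hC1 : j = k ∧ i = q ∧ l = p
    · obtain ⟨rfl, rfl, rfl⟩ := hC1
      rw [if_neg (show ¬(j = j ∧ l = i) from fun e => hpq e.2),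
        if_neg (show ¬(l = l ∧ i = j) from fun e => hij e.2),
        if_pos (show j = j ∧ i = i ∧ l = l from ⟨rfl, rfl, rfl⟩),
        if_pos (show l = l ∧ j = j ∧ i = i from ⟨rfl, rfl, rfl⟩),
        if_neg (show ¬(l = i ∧ j = i ∧ j = l) from fun e => hpq e.1),
        if_neg (show ¬(i = j ∧ l = j ∧ l = i) from fun e => hij e.1)]
      simp only [lam_lemma i j l hij hkl hpq]
    · by_cases hC2 : l = i ∧ k = q ∧ j = p
      · obtain ⟨rfl, rfl, rfl⟩ := hC2
        rw [if_neg (show ¬(k = j ∧ l = l) from fun e => hpq e.1.symm),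
          if_neg (show ¬(j = l ∧ k = k) from fun e => hij e.1.symm),
          if_neg (show ¬(j = k ∧ l = k ∧ l = j) from fun e => hpq e.1),
          if_neg (show ¬(l = j ∧ k = j ∧ k = l) from fun e => hij e.1),
          if_pos (show l = l ∧ k = k ∧ j = j from ⟨rfl, rfl, rfl⟩),
          if_pos (show k = k ∧ j = j ∧ l = l from ⟨rfl, rfl, rfl⟩)]
        have e : (lam n l j + lam n k l < n) ↔ (lam n k l + lam n j k < n) := by
          rw [Nat.add_comm (lam n l j), lam_lemma k l j hkl hij hpq,
            lam_lemma l j k hij hpq hkl, Nat.add_comm]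
        simp only [e]
      · have b1 : ¬(l = p ∧ k = j ∧ q = i) := fun e => hC1 ⟨e.2.1.symm, e.2.2.symm, e.1⟩
        have b2 : ¬(q = k ∧ p = j ∧ l = i) := fun e => hC2 ⟨e.2.2, e.1.symm, e.2.1.symm⟩
        simp [hC1, hC2, b1, b2]
  -- (x, x, a)
  · replace hij : i ≠ j := hij
    replace hkl : k ≠ l := hkl
    simp only [sg, cc, one_mul, bb_xx_b, bb_xa_def, Finsupp.neg_apply, Finsupp.smul_apply,
      smul_eq_mul, xe_apply_inl _ _ _ _ hij.symm]
    by_cases h : k = j ∧ l = i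
    · obtain ⟨rfl, rfl⟩ := h
      rw [if_pos (show k = k ∧ l = l from ⟨rfl, rfl⟩),
        if_pos (show k = k ∧ l = l from ⟨rfl, rfl⟩),
        ← mul_assoc, mul_inv_cancel₀ hK, one_mul, mul_one]
      ring
    · rw [if_neg h, if_neg h, mul_zero, mul_zero, neg_zero]
  -- (x, x, b)
  · simp [sg, cc, bb_apply_a]
  -- (x, a, x)
  · replace hij : i ≠ j := hij
    replace hpq : p ≠ q := hpq
    simp only [sg, cc, one_mul, bb_xa_def, bb_ax_def, Finsupp.neg_apply, Finsupp.smul_apply,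
      smul_eq_mul, xe_apply_inl _ _ _ _ hij.symm, xe_apply_inl _ _ _ _ hpq.symm]
    by_cases h : i = q ∧ j = p
    · obtain ⟨rfl, rfl⟩ := h
      rw [if_pos (show i = i ∧ j = j from ⟨rfl, rfl⟩),
        if_pos (show j = j ∧ i = i from ⟨rfl, rfl⟩)]
      ring
    · have h2 : ¬(p = j ∧ q = i) := fun e => h ⟨e.2.symm, e.1.symm⟩
      rw [if_neg h, if_neg h2, mul_zero, mul_zero, neg_zero]
  -- (x, a, a)
  · simp [sg, cc, bb_xa_def, Finsupp.neg_apply, Finsupp.smul_apply]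
  -- (x, a, b)
  · simp [sg, cc, bb_xa_def, Finsupp.neg_apply, Finsupp.smul_apply, bb_apply_a]
  -- (x, b, *)
  · simp [sg, cc]
  · simp [sg, cc]
  · simp [sg, cc]
  -- (a, x, x)
  · replace hkl : k ≠ l := hkl
    replace hpq : p ≠ q := hpq
    simp only [sg, cc, one_mul, bb_ax_def, bb_xx_b, Finsupp.smul_apply,
      smul_eq_mul, xe_apply_inl _ _ _ _ hpq.symm]
    by_cases h : k = q ∧ l = p
    · obtain ⟨rfl, rfl⟩ := h
      rw [if_pos (show k = k ∧ l = l from ⟨rfl, rfl⟩),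
        if_pos (show l = l ∧ k = k from ⟨rfl, rfl⟩),
        ← mul_assoc, mul_inv_cancel₀ hK, one_mul, mul_one]
    · have h2 : ¬(p = l ∧ q = k) := fun e => h ⟨e.2.symm, e.1.symm⟩
      rw [if_neg h, if_neg h2, mul_zero, mul_zero]
  -- (a, x, a)
  · simp [sg, cc, bb_ax_def, bb_xa_def, Finsupp.smul_apply, Finsupp.neg_apply]
  -- (a, x, b)
  · simp [sg, cc, bb_ax_def, Finsupp.smul_apply, bb_apply_a]
  -- (a, a, *)
  · simp [sg, cc, bb_ax_def, Finsupp.smul_apply]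
  · simp [sg, cc]
  · simp [sg, cc]
  -- (a, b, *)
  · simp [sg, cc]
  · simp [sg, cc]
  · simp [sg, cc]
  -- (b, *, *)
  · simp [sg, cc, bb_apply_a]
  · simp [sg, cc, bb_apply_a]
  · simp [sg, cc, bb_apply_a]
  · simp [sg, cc, bb_apply_a]
  · simp [sg, cc, bb_apply_a]
  · simp [sg, cc, bb_apply_a]
  · simp [sg, cc, bb_apply_a]
  · simp [sg, cc, bb_apply_a]
  · simp [sg, cc, bb_apply_a]

lemma key_s14 (hK : (2 : K) ≠ 0) (s t r : IuIdx n) :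
    Bform n K (br n K (Finsupp.single s 1) (Finsupp.single t 1)) (Finsupp.single r 1)
      = Bform n K (Finsupp.single s 1) (br n K (Finsupp.single t 1) (Finsupp.single r 1)) := by
  rw [br_single_single, br_single_single, Bform_single_right, Bform_single_left]
  exact core hK s t r

end Aux3

/-- `B` is nondegenerate and invariant, `B([u,v],w) = B(u,[v,w])`. -/
theorem stmt14 (n : ℕ) (hn : 2 ≤ n) (K : Type*) [Field K] (hK : (2 : K) ≠ 0) :
    (∀ u : Iu n K, (∀ v : Iu n K, Bform n K u v = 0) → u = 0) ∧
    (∀ u v w : Iu n K, Bform n K (br n K u v) w = Bform n K u (br n K v w)) := by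
  constructor
  · intro u hu
    ext t
    have h := hu (Finsupp.single (sg t) 1)
    rw [Bform_single_right, sg_sg, cc_sg] at h
    have h2 := cc_ne_zero hK t
    have h3 : u t = 0 := (mul_eq_zero.mp h).resolve_left h2
    simpa using h3
  · intro u v w
    induction u using Finsupp.induction_linear with
    | zero => simp
    | add f g hf hg => simp only [map_add, LinearMap.add_apply, hf, hg]
    | single su cu =>
      induction v using Finsupp.induction_linear with
      | zero => simp
      | add f g hf hg => simp only [map_add, LinearMap.add_apply, hf, hg]
      | single sv cv =>
        induction w using Finsupp.induction_linear with
        | zero => simp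
        | add f g hf hg => simp only [map_add, hf, hg]
        | single sw cw =>
          rw [show (Finsupp.single su cu : Iu n K) = cu • Finsupp.single su 1 by
              rw [Finsupp.smul_single, smul_eq_mul, mul_one],
            show (Finsupp.single sv cv : Iu n K) = cv • Finsupp.single sv 1 by
              rw [Finsupp.smul_single, smul_eq_mul, mul_one],
            show (Finsupp.single sw cw : Iu n K) = cw • Finsupp.single sw 1 by
              rw [Finsupp.smul_single, smul_eq_mul, mul_one]]
          simp only [map_smul, LinearMap.smul_apply, smul_eq_mul]
          rw [key_s14 hK su sv sw]
end
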